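/- With A₃(k) = λ₁(k)·⟨v₂(k), Ψ̂₀⟩·⟨v₁(k), Ĥ(k)v₂(k)⟩ and A₄(k) = λ₂(k)·⟨v₁(k), Ψ̂₀⟩·⟨v₂(k), Ĥ(k)v₁(k)⟩, one has (1/2π)·∫_{−π}^{π} (|A₃(k)|² + |A₄(k)|²) dk = (c₁s − s₁c)²/(1 + |s|); in particular this value is independent of the initial state Ψ̂₀ = (α, β)ᵀ with |α|² + |β|² = 1. -/

import Mathlib

open Filter Matrix

/-- `R(k) = diag(e^{ik}, e^{-ik})`. -/
noncomputable def Rmat (k : ℝ) : Matrix (Fin 2) (Fin 2) ℂ :=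
  !![Complex.exp (Complex.I * k), 0; 0, Complex.exp (-(Complex.I * k))]

/-- The coin `[[a, b], [b, -a]]` as a complex matrix. -/
noncomputable def Umat (a b : ℝ) : Matrix (Fin 2) (Fin 2) ℂ :=
  !![(a : ℂ), (b : ℂ); (b : ℂ), -(a : ℂ)]

/-- The eigenvalue `λ(k) = sgn·√(1 − c²sin²k) + i·c·sin k` of `Û(k)`
(`sgn = 1` gives `λ₁`, `sgn = -1` gives `λ₂`). -/
noncomputable def lam (c sgn : ℝ) (k : ℝ) : ℂ :=
  ((sgn * Real.sqrt (1 - c ^ 2 * Real.sin k ^ 2) : ℝ) : ℂ)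
    + Complex.I * ((c * Real.sin k : ℝ) : ℂ)

/-- The normalized eigenvector of `Û(k)` for the eigenvalue `lam c sgn k`. -/
noncomputable def evec (c s sgn : ℝ) (k : ℝ) : Fin 2 → ℂ :=
  fun j =>
    ((Real.sqrt ((Real.sqrt (1 - c ^ 2 * Real.sin k ^ 2) + sgn * c * Real.cos k)
        / (2 * s ^ 2 * Real.sqrt (1 - c ^ 2 * Real.sin k ^ 2))) : ℝ) : ℂ)
      * ![(s : ℂ) * Complex.exp (Complex.I * k),
          ((sgn * Real.sqrt (1 - c ^ 2 * Real.sin k ^ 2) - c * Real.cos k : ℝ) : ℂ)] j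

/-- The Hermitian inner product on `ℂ²`, conjugate-linear in the first argument. -/
noncomputable def cip (u w : Fin 2 → ℂ) : ℂ :=
  (starRingEnd ℂ) (u 0) * w 0 + (starRingEnd ℂ) (u 1) * w 1

/-- `A₃(k) = λ₁(k)·⟨v₂(k), Ψ̂₀⟩·⟨v₁(k), Ĥ(k)v₂(k)⟩`. -/
noncomputable def Athree (c s c₁ s₁ : ℝ) (α β : ℂ) (k : ℝ) : ℂ :=
  lam c 1 k * cip (evec c s (-1) k) ![α, β]
    * cip (evec c s 1 k) ((Rmat k * Umat c₁ s₁).mulVec (evec c s (-1) k))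

/-- `A₄(k) = λ₂(k)·⟨v₁(k), Ψ̂₀⟩·⟨v₂(k), Ĥ(k)v₁(k)⟩`. -/
noncomputable def Afour (c s c₁ s₁ : ℝ) (α β : ℂ) (k : ℝ) : ℂ :=
  lam c (-1) k * cip (evec c s 1 k) ![α, β]
    * cip (evec c s (-1) k) ((Rmat k * Umat c₁ s₁).mulVec (evec c s 1 k))

lemma Hvec (k c₁ s₁ : ℝ) (v : Fin 2 → ℂ) :
    (Rmat k * Umat c₁ s₁).mulVec v =
      ![Complex.exp (Complex.I * k) * ((c₁ : ℂ) * v 0 + (s₁ : ℂ) * v 1),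
        Complex.exp (-(Complex.I * k)) * ((s₁ : ℂ) * v 0 - (c₁ : ℂ) * v 1)] := by
  funext j
  fin_cases j <;>
    simp [Rmat, Umat, Matrix.mulVec, Matrix.mul_apply, Fin.sum_univ_two, dotProduct] <;> ring

lemma evec_eq (c s sgn k : ℝ) :
    evec c s sgn k =
      ![(Real.sqrt ((Real.sqrt (1 - c ^ 2 * Real.sin k ^ 2) + sgn * (c * Real.cos k))
          / (2 * s ^ 2 * Real.sqrt (1 - c ^ 2 * Real.sin k ^ 2))) : ℂ) * ((s : ℂ) * Complex.exp (Complex.I * k)),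
        (Real.sqrt ((Real.sqrt (1 - c ^ 2 * Real.sin k ^ 2) + sgn * (c * Real.cos k))
          / (2 * s ^ 2 * Real.sqrt (1 - c ^ 2 * Real.sin k ^ 2))) : ℂ) *
          ((sgn * Real.sqrt (1 - c ^ 2 * Real.sin k ^ 2) - c * Real.cos k : ℝ) : ℂ)] := by
  funext j
  fin_cases j <;> simp [evec, mul_assoc]

set_option maxHeartbeats 2000000 in
lemma keyPointwise (c s c₁ s₁ : ℝ) (hs : s ≠ 0) (hcs : c ^ 2 + s ^ 2 = 1)
    (α β : ℂ) (hαβ : Complex.normSq α + Complex.normSq β = 1) (k : ℝ) :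
    Complex.normSq (Athree c s c₁ s₁ α β k) + Complex.normSq (Afour c s c₁ s₁ α β k)
      = (c₁ * s - s₁ * c) ^ 2 * Real.cos k ^ 2 / (1 - c ^ 2 * Real.sin k ^ 2) := by
  have hs2 : 0 < s ^ 2 := by positivity
  have hx2 : Real.sin k ^ 2 + Real.cos k ^ 2 = 1 := Real.sin_sq_add_cos_sq k
  have hpos : 0 < 1 - c ^ 2 * Real.sin k ^ 2 := by nlinarith [sq_nonneg (c * Real.cos k)]
  set x := Real.sin k with hxdef
  set y := Real.cos k with hydef
  set N := Real.sqrt (1 - c ^ 2 * x ^ 2) with hNdef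
  have hN2 : N ^ 2 = 1 - c ^ 2 * x ^ 2 := Real.sq_sqrt hpos.le
  have hNpos : 0 < N := Real.sqrt_pos.mpr hpos
  have hNC : N ^ 2 - (c * y) ^ 2 = s ^ 2 := by
    rw [hN2]; linear_combination (-(c ^ 2 : ℝ)) * hx2 - hcs
  have hNyp : 0 < N + c * y := by nlinarith
  have hNym : 0 < N - c * y := by nlinarith
  set np := Real.sqrt ((N + c * y) / (2 * s ^ 2 * N)) with hnpdef
  set nm := Real.sqrt ((N - c * y) / (2 * s ^ 2 * N)) with hnmdef
  have hnp2 : np ^ 2 = (N + c * y) / (2 * s ^ 2 * N) := Real.sq_sqrt (by positivity)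
  have hnm2 : nm ^ 2 = (N - c * y) / (2 * s ^ 2 * N) := Real.sq_sqrt (by positivity)
  have hE : Complex.exp (Complex.I * k) = (y : ℂ) + (x : ℂ) * Complex.I := by
    rw [mul_comm, Complex.exp_mul_I]
    rw [hxdef, hydef, ← Complex.ofReal_cos, ← Complex.ofReal_sin]
  have hE' : Complex.exp (-(Complex.I * k)) = (y : ℂ) - (x : ℂ) * Complex.I := by
    rw [show -(Complex.I * (k : ℂ)) = ((-k : ℝ) : ℂ) * Complex.I by push_cast; ring,
      Complex.exp_mul_I, hxdef, hydef, ← Complex.ofReal_cos, ← Complex.ofReal_sin,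
      Real.cos_neg, Real.sin_neg]
    push_cast; ring
  simp only [Athree, Afour]
  rw [Hvec, Hvec]
  simp only [evec_eq, Matrix.cons_val_zero, Matrix.cons_val_one, Matrix.head_cons]
  rw [← hxdef, ← hydef, ← hNdef]
  rw [show N + 1 * (c * y) = N + c * y by ring, show N + -1 * (c * y) = N - c * y by ring,
    show (1 : ℝ) * N - c * y = N - c * y by ring, show (-1 : ℝ) * N - c * y = -(N + c * y) by ring,
    ← hnpdef, ← hnmdef, hE, hE']
  simp only [cip, Matrix.cons_val_zero, Matrix.cons_val_one, Matrix.head_cons]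
  have hIc : Complex.I ^ 2 = -1 := Complex.I_sq
  have hx2c : (x : ℂ) ^ 2 + (y : ℂ) ^ 2 = 1 := by exact_mod_cast hx2
  have hNCc : (N : ℂ) ^ 2 - ((c : ℂ) * y) ^ 2 = (s : ℂ) ^ 2 := by exact_mod_cast hNC
  have hD : (2 * s ^ 2 * N) ≠ 0 := ne_of_gt (by nlinarith [mul_pos hs2 hNpos])
  have hnp2' : np ^ 2 * (2 * s ^ 2 * N) = N + c * y := by
    rw [hnp2]; field_simp
  have hnm2' : nm ^ 2 * (2 * s ^ 2 * N) = N - c * y := by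
    rw [hnm2]; field_simp
  have hαβ' : α.re * α.re + α.im * α.im + (β.re * β.re + β.im * β.im) = 1 := by
    simpa [Complex.normSq_apply] using hαβ
  have hZ3 : ((starRingEnd ℂ) ((np : ℂ) * ((s : ℂ) * ((y : ℂ) + (x : ℂ) * Complex.I))) *
        (((y : ℂ) + (x : ℂ) * Complex.I) *
          ((c₁ : ℂ) * ((nm : ℂ) * ((s : ℂ) * ((y : ℂ) + (x : ℂ) * Complex.I))) +
            (s₁ : ℂ) * ((nm : ℂ) * ((-(N + c * y) : ℝ) : ℂ)))) +
      (starRingEnd ℂ) ((np : ℂ) * ((N - c * y : ℝ) : ℂ)) *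
        (((y : ℂ) - (x : ℂ) * Complex.I) *
          ((s₁ : ℂ) * ((nm : ℂ) * ((s : ℂ) * ((y : ℂ) + (x : ℂ) * Complex.I))) -
            (c₁ : ℂ) * ((nm : ℂ) * ((-(N + c * y) : ℝ) : ℂ)))))
      = ((np * nm * (2 * s * y * (c₁ * s - s₁ * c)) : ℝ) : ℂ) := by
    simp only [_root_.map_mul, _root_.map_add, _root_.map_sub, Complex.conj_ofReal, Complex.conj_I]
    push_cast
    linear_combination
      (-(np : ℂ) * nm * x ^ 2 * ((s : ℂ) * ((c₁ : ℂ) * s * ((y : ℂ) + x * Complex.I)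
          - (s₁ : ℂ) * ((N : ℂ) + c * y)) + (s₁ : ℂ) * s * ((N : ℂ) - c * y))) * hIc
      + ((np : ℂ) * nm * ((s : ℂ) * ((c₁ : ℂ) * s * ((y : ℂ) + x * Complex.I)
          - (s₁ : ℂ) * ((N : ℂ) + c * y)) + (s₁ : ℂ) * s * ((N : ℂ) - c * y))) * hx2c
      + ((np : ℂ) * nm * c₁ * ((y : ℂ) - x * Complex.I)) * hNCc
  have hZ4 : ((starRingEnd ℂ) ((nm : ℂ) * ((s : ℂ) * ((y : ℂ) + (x : ℂ) * Complex.I))) *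
        (((y : ℂ) + (x : ℂ) * Complex.I) *
          ((c₁ : ℂ) * ((np : ℂ) * ((s : ℂ) * ((y : ℂ) + (x : ℂ) * Complex.I))) +
            (s₁ : ℂ) * ((np : ℂ) * ((N - c * y : ℝ) : ℂ)))) +
      (starRingEnd ℂ) ((nm : ℂ) * ((-(N + c * y) : ℝ) : ℂ)) *
        (((y : ℂ) - (x : ℂ) * Complex.I) *
          ((s₁ : ℂ) * ((np : ℂ) * ((s : ℂ) * ((y : ℂ) + (x : ℂ) * Complex.I))) -
            (c₁ : ℂ) * ((np : ℂ) * ((N - c * y : ℝ) : ℂ)))))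
      = ((np * nm * (2 * s * y * (c₁ * s - s₁ * c)) : ℝ) : ℂ) := by
    simp only [_root_.map_mul, _root_.map_add, _root_.map_sub, Complex.conj_ofReal, Complex.conj_I]
    push_cast
    linear_combination
      (-(np : ℂ) * nm * x ^ 2 * ((c₁ : ℂ) * s ^ 2 * ((y : ℂ) + x * Complex.I)
          - 2 * (s₁ : ℂ) * s * c * y)) * hIc
      + ((np : ℂ) * nm * ((c₁ : ℂ) * s ^ 2 * ((y : ℂ) + x * Complex.I)
          - 2 * (s₁ : ℂ) * s * c * y)) * hx2c
      + ((np : ℂ) * nm * c₁ * ((y : ℂ) - x * Complex.I)) * hNCc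
  rw [hZ3, hZ4]
  simp only [Complex.normSq_mul, Complex.normSq_ofReal]
  have hl1 : Complex.normSq (lam c 1 k) = 1 := by
    simp only [lam, Complex.normSq_apply, Complex.add_re, Complex.add_im, Complex.mul_re,
      Complex.mul_im, Complex.I_re, Complex.I_im, Complex.ofReal_re, Complex.ofReal_im]
    rw [← hxdef, ← hNdef]
    nlinarith [hN2]
  have hl2 : Complex.normSq (lam c (-1) k) = 1 := by
    simp only [lam, Complex.normSq_apply, Complex.add_re, Complex.add_im, Complex.mul_re,
      Complex.mul_im, Complex.I_re, Complex.I_im, Complex.ofReal_re, Complex.ofReal_im]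
    rw [← hxdef, ← hNdef]
    nlinarith [hN2]
  rw [hl1, hl2]
  set W3 := ((starRingEnd ℂ) ((nm : ℂ) * ((s : ℂ) * ((y : ℂ) + (x : ℂ) * Complex.I))) * α +
      (starRingEnd ℂ) ((nm : ℂ) * ((-(N + c * y) : ℝ) : ℂ)) * β) with hW3def
  set W4 := ((starRingEnd ℂ) ((np : ℂ) * ((s : ℂ) * ((y : ℂ) + (x : ℂ) * Complex.I))) * α +
      (starRingEnd ℂ) ((np : ℂ) * ((N - c * y : ℝ) : ℂ)) * β) with hW4def
  have hWsum : Complex.normSq W3 + Complex.normSq W4 = 1 := by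
    have hWsum' : (Complex.normSq W3 + Complex.normSq W4) * (2 * s ^ 2 * N)
        = 1 * (2 * s ^ 2 * N) := by
      simp only [hW3def, hW4def, _root_.map_mul, _root_.map_add, Complex.conj_ofReal, Complex.conj_I,
        Complex.normSq_apply, Complex.add_re, Complex.add_im, Complex.mul_re, Complex.mul_im,
        Complex.sub_re, Complex.sub_im, Complex.neg_re, Complex.neg_im, Complex.I_re,
        Complex.I_im, Complex.ofReal_re, Complex.ofReal_im]
      linear_combination
        (s ^ 2 * (x ^ 2 + y ^ 2) * (α.re ^ 2 + α.im ^ 2)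
          + (N + c * y) ^ 2 * (β.re ^ 2 + β.im ^ 2)
          - 2 * s * (N + c * y) * (y * (α.re * β.re + α.im * β.im)
              + x * (α.im * β.re - α.re * β.im))) * hnm2'
        + (s ^ 2 * (x ^ 2 + y ^ 2) * (α.re ^ 2 + α.im ^ 2)
          + (N - c * y) ^ 2 * (β.re ^ 2 + β.im ^ 2)
          + 2 * s * (N - c * y) * (y * (α.re * β.re + α.im * β.im)
              + x * (α.im * β.re - α.re * β.im))) * hnp2'
        + (2 * N * s ^ 2 * (α.re ^ 2 + α.im ^ 2)) * hx2
        + (2 * N * (β.re ^ 2 + β.im ^ 2)) * hNC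
        + (2 * N * s ^ 2) * hαβ'
    exact mul_right_cancel₀ hD hWsum'
  have hm2 : ((np * nm * (2 * s * y * (c₁ * s - s₁ * c))) * (np * nm * (2 * s * y * (c₁ * s - s₁ * c))))
      * (1 - c ^ 2 * x ^ 2) * (2 * s ^ 2 * N) ^ 2
      = (c₁ * s - s₁ * c) ^ 2 * y ^ 2 * (2 * s ^ 2 * N) ^ 2 := by
    linear_combination
      ((N - c * y) * (4 * s ^ 2 * y ^ 2 * (c₁ * s - s₁ * c) ^ 2 * (1 - c ^ 2 * x ^ 2))) * hnp2'
      + (np ^ 2 * (2 * s ^ 2 * N) * (4 * s ^ 2 * y ^ 2 * (c₁ * s - s₁ * c) ^ 2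
          * (1 - c ^ 2 * x ^ 2))) * hnm2'
      + ((1 - c ^ 2 * x ^ 2) * 4 * s ^ 2 * y ^ 2 * (c₁ * s - s₁ * c) ^ 2) * hNC
      + (-(4 * s ^ 4 * y ^ 2 * (c₁ * s - s₁ * c) ^ 2)) * hN2
  have hm : ((np * nm * (2 * s * y * (c₁ * s - s₁ * c))) * (np * nm * (2 * s * y * (c₁ * s - s₁ * c))))
      * (1 - c ^ 2 * x ^ 2) = (c₁ * s - s₁ * c) ^ 2 * y ^ 2 :=
    mul_right_cancel₀ (pow_ne_zero 2 hD) hm2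
  rw [eq_div_iff (ne_of_gt hpos)]
  linear_combination
    ((np * nm * (2 * s * y * (c₁ * s - s₁ * c))) * (np * nm * (2 * s * y * (c₁ * s - s₁ * c)))
      * (1 - c ^ 2 * x ^ 2)) * hWsum + hm

set_option maxHeartbeats 1000000 in
lemma integral_aux (c s : ℝ) (hs : s ≠ 0) (hc : c ≠ 0) (hcs : c ^ 2 + s ^ 2 = 1) :
    ∫ k in (-Real.pi)..Real.pi, Real.cos k ^ 2 / (1 - c ^ 2 * Real.sin k ^ 2)
      = 2 * Real.pi / (1 + |s|) := by
  set b := |s| with hbdef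
  have hb : 0 < b := abs_pos.mpr hs
  have hb2 : b ^ 2 = s ^ 2 := sq_abs s
  have ha : 0 < c ^ 2 := by positivity
  have ha1 : c ^ 2 ≤ 1 := by nlinarith [sq_nonneg s]
  have hb1 : b < 1 := by nlinarith
  have hDk : ∀ k : ℝ, 0 < (1 - c ^ 2 / 2 + b) + (c ^ 2 / 2) * Real.cos (2 * k) := by
    intro k
    nlinarith [Real.neg_one_le_cos (2 * k), Real.cos_le_one (2 * k)]
  have hpos : ∀ k : ℝ, 0 < 1 - c ^ 2 * Real.sin k ^ 2 := by
    intro k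
    nlinarith [Real.sin_sq_le_one k, sq_nonneg (Real.sin k), sq_nonneg s]
  set F : ℝ → ℝ := fun k => (1 - b) / c ^ 2 * k +
    (b / c ^ 2) * Real.arctan ((c ^ 2 / 2) * Real.sin (2 * k)
      / ((1 - c ^ 2 / 2 + b) + (c ^ 2 / 2) * Real.cos (2 * k))) with hFdef
  have hF : ∀ k : ℝ, HasDerivAt F (Real.cos k ^ 2 / (1 - c ^ 2 * Real.sin k ^ 2)) k := by
    intro k
    have h2k : HasDerivAt (fun k : ℝ => 2 * k) 2 k := by
      simpa using (hasDerivAt_id k).const_mul 2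
    have hs2k : HasDerivAt (fun k : ℝ => Real.sin (2 * k)) (Real.cos (2 * k) * 2) k :=
      (Real.hasDerivAt_sin (2 * k)).comp k h2k
    have hc2k : HasDerivAt (fun k : ℝ => Real.cos (2 * k)) (-Real.sin (2 * k) * 2) k :=
      (Real.hasDerivAt_cos (2 * k)).comp k h2k
    have hnum : HasDerivAt (fun k : ℝ => (c ^ 2 / 2) * Real.sin (2 * k))
        ((c ^ 2 / 2) * (Real.cos (2 * k) * 2)) k := hs2k.const_mul _
    have hden : HasDerivAt (fun k : ℝ => (1 - c ^ 2 / 2 + b) + (c ^ 2 / 2) * Real.cos (2 * k))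
        ((c ^ 2 / 2) * (-Real.sin (2 * k) * 2)) k := (hc2k.const_mul _).const_add _
    have hg := hnum.div hden (ne_of_gt (hDk k))
    have hat := hg.arctan
    have hlin : HasDerivAt (fun k : ℝ => (1 - b) / c ^ 2 * k) ((1 - b) / c ^ 2) k := by
      simpa using (hasDerivAt_id k).const_mul ((1 - b) / c ^ 2)
    have htot := hlin.add (hat.const_mul (b / c ^ 2))
    convert htot using 1
    case e'_4 => rfl
    case e'_5 => rfl
    case e'_8 => rfl
    simp only [Pi.div_apply]
    rw [Real.sin_two_mul, Real.cos_two_mul]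
    have hpy : Real.sin k ^ 2 + Real.cos k ^ 2 = 1 := Real.sin_sq_add_cos_sq k
    have hD' : (0:ℝ) < (1 - c ^ 2 / 2 + b) + (c ^ 2 / 2) * (2 * Real.cos k ^ 2 - 1) := by
      have := hDk k; rwa [Real.cos_two_mul] at this
    have hpy : Real.sin k ^ 2 + Real.cos k ^ 2 = 1 := Real.sin_sq_add_cos_sq k
    have hbc : b ^ 2 = 1 - c ^ 2 := by rw [hb2]; linarith
    set X := Real.sin k with hX
    set Y := Real.cos k with hY
    have hppos : (0:ℝ) < 1 - c ^ 2 * X ^ 2 := hpos k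
    set Dd := 1 - c ^ 2 / 2 + b + c ^ 2 / 2 * (2 * Y ^ 2 - 1) with hDd
    set uu := c ^ 2 / 2 * (2 * X * Y) with huu
    have hDpos : (0:ℝ) < Dd := hD'
    have h2 : Dd ≠ 0 := ne_of_gt hDpos
    have h3 : Dd ^ 2 + uu ^ 2 ≠ 0 := by positivity
    have e1 : 1 + (uu / Dd) ^ 2 = (Dd ^ 2 + uu ^ 2) / Dd ^ 2 := by field_simp
    rw [e1, one_div_div]
    set nn := c ^ 2 / 2 * ((2 * Y ^ 2 - 1) * 2) * Dd - uu * (c ^ 2 / 2 * (-(2 * X * Y) * 2)) with hnn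
    have e3 : Dd ^ 2 / (Dd ^ 2 + uu ^ 2) * (nn / Dd ^ 2) = nn / (Dd ^ 2 + uu ^ 2) := by
      field_simp
    rw [e3]
    have e4 : b / c ^ 2 * (nn / (Dd ^ 2 + uu ^ 2)) = (b * nn) / (c ^ 2 * (Dd ^ 2 + uu ^ 2)) := by
      rw [div_mul_div_comm]
    rw [e4, div_add_div _ _ (pow_ne_zero 2 hc) (mul_ne_zero (pow_ne_zero 2 hc) h3),
      div_eq_div_iff (ne_of_gt hppos) (mul_ne_zero (pow_ne_zero 2 hc)
        (mul_ne_zero (pow_ne_zero 2 hc) h3))]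
    rw [hnn, hDd, huu]
    linear_combination (c^2 * (c^2 + (-2)*c^4 + c^6 + b*c^2 + (-1)*b*c^4 + (-1)*b^2*c^2 + b^2*c^4 + (-1)*b^3*c^2 + Y^2*c^4 + (-1)*Y^2*c^6 + Y^2*b*c^4 + Y^4*c^6 + X^2*Y^2*c^6 + X^2*Y^2*b*c^6)) * hpy + (c^2 * (1 + (-2)*c^2 + c^4 + b + (-1)*b*c^2 + 2*Y^2*c^2 + (-1)*Y^2*c^4 + Y^2*b*c^2)) * hbc
  have hcont : Continuous fun k : ℝ => Real.cos k ^ 2 / (1 - c ^ 2 * Real.sin k ^ 2) := by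
    apply Continuous.div (by continuity) (by continuity)
    intro k; exact (hpos k).ne'
  rw [intervalIntegral.integral_eq_sub_of_hasDerivAt (fun k _ => hF k)
    (hcont.intervalIntegrable _ _)]
  have hs2pi : Real.sin (2 * Real.pi) = 0 := by
    rw [Real.sin_two_pi]
  have hs2pi' : Real.sin (2 * -Real.pi) = 0 := by
    rw [show 2 * -Real.pi = -(2 * Real.pi) by ring, Real.sin_neg, hs2pi, neg_zero]
  rw [hFdef]
  simp only [hs2pi, hs2pi', mul_zero, zero_div, Real.arctan_zero]
  have h1b : (1:ℝ) + b ≠ 0 := by positivity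
  have hbc : b ^ 2 = 1 - c ^ 2 := by rw [hb2]; linarith
  field_simp
  ring_nf
  linear_combination (-2*Real.pi) * hbc

theorem stmt14
    (θ θ₁ : ℝ)
    (hθmem : θ ∈ Set.Ico (0 : ℝ) (2 * Real.pi))
    (hθ₁mem : θ₁ ∈ Set.Ico (0 : ℝ) (2 * Real.pi))
    (hθ0 : θ ≠ 0) (hθhalf : θ ≠ Real.pi / 2) (hθpi : θ ≠ Real.pi)
    (hθ3half : θ ≠ 3 * Real.pi / 2)
    (c s c₁ s₁ : ℝ)
    (hc : c = Real.cos θ) (hs : s = Real.sin θ)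
    (hc₁ : c₁ = Real.cos θ₁) (hs₁ : s₁ = Real.sin θ₁)
    (α β : ℂ) (hαβ : Complex.normSq α + Complex.normSq β = 1) :
    (∫ k in (-Real.pi)..Real.pi,
        (Complex.normSq (Athree c s c₁ s₁ α β k) + Complex.normSq (Afour c s c₁ s₁ α β k)))
        / (2 * Real.pi)
      = (c₁ * s - s₁ * c) ^ 2 / (1 + |s|) := by
  have hcs : c ^ 2 + s ^ 2 = 1 := by rw [hc, hs]; exact Real.cos_sq_add_sin_sq θ
  have hπ := Real.pi_pos
  have hs0 : s ≠ 0 := by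
    rw [hs]; intro h
    rw [Real.sin_eq_zero_iff] at h
    obtain ⟨n, hn⟩ := h
    have h1 : (0:ℝ) ≤ (n:ℝ) * Real.pi := hn ▸ hθmem.1
    have h2 : (n:ℝ) * Real.pi < 2 * Real.pi := hn ▸ hθmem.2
    have hn1 : (0:ℤ) ≤ n := by exact_mod_cast (by nlinarith : (0:ℝ) ≤ (n:ℝ))
    have hn2 : n < 2 := by exact_mod_cast (by nlinarith : ((n:ℝ) < 2))
    interval_cases n
    · exact hθ0 (by simpa using hn.symm)
    · exact hθpi (by simpa using hn.symm)
  have hc0 : c ≠ 0 := by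
    rw [hc]; intro h
    rw [Real.cos_eq_zero_iff] at h
    obtain ⟨n, hn⟩ := h
    have h1 : (0:ℝ) ≤ (2 * (n:ℝ) + 1) * Real.pi / 2 := hn ▸ hθmem.1
    have h2 : (2 * (n:ℝ) + 1) * Real.pi / 2 < 2 * Real.pi := hn ▸ hθmem.2
    have hn1 : (-1:ℤ) < n := by exact_mod_cast (by nlinarith : ((-1:ℝ) < (n:ℝ)))
    have hn2 : n < 2 := by exact_mod_cast (by nlinarith : ((n:ℝ) < 2))
    interval_cases n
    · exact hθhalf (by push_cast at hn; linarith)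
    · exact hθ3half (by push_cast at hn; linarith)
  have hEq : Set.EqOn
      (fun k => (Complex.normSq (Athree c s c₁ s₁ α β k) + Complex.normSq (Afour c s c₁ s₁ α β k)))
      (fun k => (c₁ * s - s₁ * c) ^ 2 * (Real.cos k ^ 2 / (1 - c ^ 2 * Real.sin k ^ 2)))
      (Set.uIcc (-Real.pi) Real.pi) := by
    intro k _
    exact (keyPointwise c s c₁ s₁ hs0 hcs α β hαβ k).trans (mul_div_assoc _ _ _)
  rw [intervalIntegral.integral_congr hEq, intervalIntegral.integral_const_mul,
    integral_aux c s hs0 hc0 hcs]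
  have h1b : (0:ℝ) < 1 + |s| := by positivity
  field_simp
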